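/- arXiv:1508.04406 — 2 statements merged into one kernel-verified Lean document; each statement's English description precedes it below -/
import Mathlib

section
/- For a positive integer n, let L(n) denote the length of the longest interval of consecutive integers each of which fails to be coprime to n (i.e., the largest number of consecutive integers each sharing a common factor greater than 1 with n). Then L(n) = o(n) as n → ∞; that is, L(n)/n → 0. -/
open MeasureTheory Filter Set

open Finset ArithmeticFunction ArithmeticFunction.Moebius in
private theorem runlen_sum_mu (m : ℕ) (hm : m ≠ 1) : ∑ d ∈ m.divisors, (μ d) = 0 := by
  have := congrArg (fun f : ArithmeticFunction ℤ => f m) moebius_mul_coe_zeta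
  simp only [coe_mul_zeta_apply] at this
  rw [this, one_apply_ne hm]

private theorem runlen_gcd_divisors (r : ℕ) (hr : r ≠ 0) (x : ℤ) :
    (Int.gcd x r).divisors = r.divisors.filter (fun d : ℕ => (d:ℤ) ∣ x) := by
  ext d
  simp only [Nat.mem_divisors, Finset.mem_filter]
  constructor
  · rintro ⟨hd, hg⟩
    have h1 : (d:ℤ) ∣ x := dvd_trans (Int.natCast_dvd_natCast.mpr hd) (Int.gcd_dvd_left _ _)
    have h2 : (d:ℤ) ∣ (r:ℤ) := dvd_trans (Int.natCast_dvd_natCast.mpr hd) (Int.gcd_dvd_right _ _)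
    exact ⟨⟨Int.natCast_dvd_natCast.mp h2, hr⟩, h1⟩
  · rintro ⟨⟨hdr, -⟩, hdx⟩
    refine ⟨Int.natCast_dvd_natCast.mp (Int.dvd_coe_gcd hdx (Int.natCast_dvd_natCast.mpr hdr)), ?_⟩
    simp [Int.gcd_eq_zero_iff, hr]

open Finset ArithmeticFunction ArithmeticFunction.Moebius in
private theorem runlen_count_zero (r : ℕ) (hr : r ≠ 0) (a : ℤ) (L : ℕ)
    (h : ∀ x ∈ Finset.Ioc a (a + L), Int.gcd x r ≠ 1) :
    ∑ d ∈ r.divisors, (μ d) * (((Finset.Ioc a (a + L)).filter (fun x => (d:ℤ) ∣ x)).card : ℤ)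
      = 0 := by
  have key : ∀ x ∈ Finset.Ioc a (a + L),
      ∑ d ∈ r.divisors, (if (d:ℤ) ∣ x then (μ d) else 0) = 0 := by
    intro x hx
    rw [← Finset.sum_filter, ← runlen_gcd_divisors r hr x]
    exact runlen_sum_mu _ (h x hx)
  calc ∑ d ∈ r.divisors, (μ d) * (((Finset.Ioc a (a + L)).filter (fun x => (d:ℤ) ∣ x)).card : ℤ)
      = ∑ d ∈ r.divisors, ∑ x ∈ Finset.Ioc a (a + L), (if (d:ℤ) ∣ x then (μ d) else 0) := by
        refine Finset.sum_congr rfl fun d _ => ?_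
        rw [Finset.sum_ite, Finset.sum_const_zero, add_zero, Finset.sum_const,
          nsmul_eq_mul, mul_comm]
    _ = ∑ x ∈ Finset.Ioc a (a + L), ∑ d ∈ r.divisors, (if (d:ℤ) ∣ x then (μ d) else 0) :=
        Finset.sum_comm
    _ = 0 := by
        rw [Finset.sum_congr rfl key]
        simp

open Finset ArithmeticFunction ArithmeticFunction.Moebius in
private theorem runlen_totient_moebius (r : ℕ) (hr : 0 < r) :
    ((r.totient : ℚ)) = ∑ d ∈ r.divisors, (μ d : ℚ) * ((r / d : ℕ) : ℚ) := by
  have H := (sum_eq_iff_sum_smul_moebius_eq (R := ℚ)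
    (f := fun d => (d.totient : ℚ)) (g := fun d => (d : ℚ))).mp ?_ r hr
  · rw [← H, ← Nat.sum_divisorsAntidiagonal (fun d e => (μ d : ℚ) * (e : ℚ))]
    refine Finset.sum_congr rfl fun x _ => ?_
    rw [zsmul_eq_mul]
  · intro n hn
    exact_mod_cast congrArg (fun k : ℕ => (k : ℚ)) (Nat.sum_totient n)

private theorem runlen_card_mult_bound (d : ℕ) (hd : 0 < d) (a : ℤ) (L : ℕ) :
    |(L : ℚ) - (d : ℚ) * (((Finset.Ioc a (a + L)).filter (fun x => (d:ℤ) ∣ x)).card : ℚ)| ≤ d := by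
  have hd' : (0:ℤ) < (d:ℤ) := by exact_mod_cast hd
  have hcard := Int.Ioc_filter_dvd_card a (a + L) hd'
  set b : ℤ := a + L with hb
  have hq : (0:ℚ) < ((d:ℤ):ℚ) := by exact_mod_cast hd
  have hab : (a:ℚ) / ((d:ℤ):ℚ) ≤ (b:ℚ) / ((d:ℤ):ℚ) := by
    have : a ≤ b := by simp [hb]
    gcongr
  have hmono : ⌊(a : ℚ) / ((d:ℤ):ℚ)⌋ ≤ ⌊(b : ℚ) / ((d:ℤ):ℚ)⌋ := Int.floor_le_floor hab
  have hcval : ((((Finset.Ioc a b).filter (fun x => (d:ℤ) ∣ x)).card : ℤ)) =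
      ⌊(b : ℚ) / ((d:ℤ):ℚ)⌋ - ⌊(a : ℚ) / ((d:ℤ):ℚ)⌋ := by
    rw [hcard, max_eq_left (by omega)]
  have f1 : (⌊(b : ℚ) / ((d:ℤ):ℚ)⌋ : ℚ) ≤ (b:ℚ) / ((d:ℤ):ℚ) := Int.floor_le _
  have f2 : (b:ℚ) / ((d:ℤ):ℚ) - 1 < (⌊(b : ℚ) / ((d:ℤ):ℚ)⌋ : ℚ) := Int.sub_one_lt_floor _
  have f3 : (⌊(a : ℚ) / ((d:ℤ):ℚ)⌋ : ℚ) ≤ (a:ℚ) / ((d:ℤ):ℚ) := Int.floor_le _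
  have f4 : (a:ℚ) / ((d:ℤ):ℚ) - 1 < (⌊(a : ℚ) / ((d:ℤ):ℚ)⌋ : ℚ) := Int.sub_one_lt_floor _
  have hcq : (((Finset.Ioc a b).filter (fun x => (d:ℤ) ∣ x)).card : ℚ)
      = (⌊(b : ℚ) / ((d:ℤ):ℚ)⌋ : ℚ) - (⌊(a : ℚ) / ((d:ℤ):ℚ)⌋ : ℚ) := by exact_mod_cast hcval
  have hL : (b:ℚ) = (a:ℚ) + L := by exact_mod_cast congrArg (fun z : ℤ => (z:ℚ)) hb
  rw [abs_le, hcq]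
  have e1 : ((d:ℤ):ℚ) * ((b:ℚ) / ((d:ℤ):ℚ)) = (b:ℚ) := by field_simp
  have e2 : ((d:ℤ):ℚ) * ((a:ℚ) / ((d:ℤ):ℚ)) = (a:ℚ) := by field_simp
  push_cast at *
  constructor <;> nlinarith

open Finset ArithmeticFunction ArithmeticFunction.Moebius in
private theorem runlen_key (r : ℕ) (hr : Squarefree r) (a : ℤ) (L : ℕ)
    (h : ∀ x ∈ Finset.Ioc a (a + L), Int.gcd x r ≠ 1) :
    (L:ℚ) * r.totient ≤ (r.divisors.card : ℚ) * r := by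
  classical
  have hr0 : r ≠ 0 := hr.ne_zero
  set M : ℕ → ℚ := fun d => (((Finset.Ioc a (a + L)).filter (fun x => (d:ℤ) ∣ x)).card : ℚ)
    with hM
  have hzero : ∑ d ∈ r.divisors, (μ d : ℚ) * M d = 0 := by
    have h0 := congrArg (fun z : ℤ => (z : ℚ)) (runlen_count_zero r hr0 a L h)
    push_cast at h0
    simpa [hM] using h0
  have htot := runlen_totient_moebius r (Nat.pos_of_ne_zero hr0)
  have expand : (L:ℚ) * r.totient
      = ∑ d ∈ r.divisors, (μ d : ℚ) * (((r / d : ℕ) : ℚ) * L - (r:ℚ) * M d) := by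
    have h1 : ∑ d ∈ r.divisors, (μ d : ℚ) * ((r:ℚ) * M d)
        = (r:ℚ) * ∑ d ∈ r.divisors, (μ d : ℚ) * M d := by
      rw [Finset.mul_sum]; refine Finset.sum_congr rfl fun d _ => by ring
    calc (L:ℚ) * r.totient = ∑ d ∈ r.divisors, (μ d : ℚ) * (((r / d : ℕ) : ℚ) * L) := by
          rw [htot, Finset.mul_sum]
          refine (Finset.sum_congr rfl fun d _ => by ring).symm
      _ = ∑ d ∈ r.divisors, (μ d : ℚ) * (((r / d : ℕ) : ℚ) * L)
            - ∑ d ∈ r.divisors, (μ d : ℚ) * ((r:ℚ) * M d) := by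
          rw [h1, hzero, mul_zero, sub_zero]
      _ = _ := by
          rw [← Finset.sum_sub_distrib]
          exact Finset.sum_congr rfl fun d _ => by ring
  have bound : ∀ d ∈ r.divisors,
      |(μ d : ℚ) * (((r / d : ℕ) : ℚ) * L - (r:ℚ) * M d)| ≤ (r:ℚ) := by
    intro d hd
    obtain ⟨hdvd, -⟩ := Nat.mem_divisors.mp hd
    have hdpos : 0 < d := Nat.pos_of_mem_divisors hd
    have hrd : ((r / d : ℕ) : ℚ) * (d:ℚ) = (r:ℚ) := by
      exact_mod_cast congrArg (fun k : ℕ => (k:ℚ)) (Nat.div_mul_cancel hdvd)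
    have hmu : |(μ d : ℚ)| ≤ 1 := by
      have := abs_moebius_le_one (n := d)
      exact_mod_cast this
    have hfact : ((r / d : ℕ) : ℚ) * L - (r:ℚ) * M d
        = ((r / d : ℕ) : ℚ) * ((L:ℚ) - (d:ℚ) * M d) := by
      rw [← hrd]; ring
    rw [abs_mul, hfact, abs_mul]
    have h2 : |((L:ℚ) - (d:ℚ) * M d)| ≤ (d:ℚ) := runlen_card_mult_bound d hdpos a L
    have h3 : |((r / d : ℕ) : ℚ)| = ((r / d : ℕ) : ℚ) := abs_of_nonneg (by positivity)
    calc |(μ d : ℚ)| * (|((r / d : ℕ) : ℚ)| * |(L:ℚ) - (d:ℚ) * M d|)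
        ≤ 1 * (((r / d : ℕ) : ℚ) * (d:ℚ)) := by
          rw [h3]
          refine mul_le_mul hmu ?_ (by positivity) zero_le_one
          exact mul_le_mul_of_nonneg_left h2 (by positivity)
      _ = (r:ℚ) := by rw [one_mul, hrd]
  calc (L:ℚ) * r.totient ≤ |(L:ℚ) * r.totient| := le_abs_self _
    _ = |∑ d ∈ r.divisors, (μ d : ℚ) * (((r / d : ℕ) : ℚ) * L - (r:ℚ) * M d)| := by rw [expand]
    _ ≤ ∑ d ∈ r.divisors, |(μ d : ℚ) * (((r / d : ℕ) : ℚ) * L - (r:ℚ) * M d)| :=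
        Finset.abs_sum_le_sum_abs _ _
    _ ≤ ∑ _d ∈ r.divisors, (r:ℚ) := Finset.sum_le_sum bound
    _ = (r.divisors.card : ℚ) * r := by rw [Finset.sum_const, nsmul_eq_mul]

private theorem runlen_sqf_prod (s : Finset ℕ) (hs : ∀ p ∈ s, p.Prime) :
    Squarefree (∏ p ∈ s, p) := by
  classical
  induction s using Finset.induction_on with
  | empty => simp
  | @insert p t hp ih =>
    rw [Finset.prod_insert hp]
    have hpp : p.Prime := hs p (Finset.mem_insert_self p t)
    have hcop : Nat.Coprime p (∏ q ∈ t, q) := by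
      apply Nat.Coprime.prod_right
      intro q hq
      exact (Nat.coprime_primes hpp (hs q (Finset.mem_insert_of_mem hq))).mpr
        (fun e => hp (e ▸ hq))
    exact (Nat.squarefree_mul hcop).mpr
      ⟨hpp.squarefree, ih (fun q hq => hs q (Finset.mem_insert_of_mem hq))⟩

private theorem runlen_gcd_transfer (n : ℕ) (hn : n ≠ 0) (x : ℤ)
    (h : 1 < Int.gcd x n) : 1 < Int.gcd x (((∏ p ∈ n.primeFactors, p : ℕ) : ℤ)) := by
  set r : ℕ := ∏ p ∈ n.primeFactors, p with hr
  have hr0 : r ≠ 0 := (runlen_sqf_prod _ (fun p hp => Nat.prime_of_mem_primeFactors hp)).ne_zero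
  obtain ⟨p, hpp, hpd⟩ := Nat.exists_prime_and_dvd (by omega : Int.gcd x n ≠ 1)
  have hpx : (p:ℤ) ∣ x := dvd_trans (Int.natCast_dvd_natCast.mpr hpd) (Int.gcd_dvd_left _ _)
  have hpn : p ∣ n := by
    have : (p:ℤ) ∣ (n:ℤ) := dvd_trans (Int.natCast_dvd_natCast.mpr hpd) (Int.gcd_dvd_right _ _)
    exact_mod_cast this
  have hpr : p ∣ r := Finset.dvd_prod_of_mem _ (Nat.mem_primeFactors.mpr ⟨hpp, hpn, hn⟩)
  have hpg : p ∣ Int.gcd x r :=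
    Int.natCast_dvd_natCast.mp (Int.dvd_coe_gcd hpx (Int.natCast_dvd_natCast.mpr hpr))
  have hg0 : Int.gcd x r ≠ 0 := by
    simp [Int.gcd_eq_zero_iff, hr0]
  exact lt_of_lt_of_le hpp.one_lt (Nat.le_of_dvd (Nat.pos_of_ne_zero hg0) hpg)

private theorem runlen_card_divisors (r : ℕ) (hr : Squarefree r) :
    r.divisors.card = 2 ^ r.primeFactors.card := by
  rw [Nat.card_divisors hr.ne_zero]
  rw [Finset.prod_congr rfl (fun p hp =>
    by rw [Nat.factorization_eq_one_of_squarefree hr (Nat.prime_of_mem_primeFactors hp)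
      (Nat.dvd_of_mem_primeFactors hp)])]
  simp

private theorem runlen_totient_lower (r : ℕ) (hr : r ≠ 0) :
    (r:ℚ) ≤ 2 ^ r.primeFactors.card * r.totient := by
  have htot := Nat.totient_eq_mul_prod_factors r
  have hprod : (1:ℚ) ≤ ∏ p ∈ r.primeFactors, (2 * (1 - (p:ℚ)⁻¹)) := by
    have key : ∏ _p ∈ r.primeFactors, (1:ℚ) ≤ ∏ p ∈ r.primeFactors, (2 * (1 - (p:ℚ)⁻¹)) := by
      apply Finset.prod_le_prod (fun _ _ => zero_le_one)
      intro p hp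
      have h2 : (2:ℚ) ≤ (p:ℚ) := by exact_mod_cast (Nat.prime_of_mem_primeFactors hp).two_le
      have hp0 : (0:ℚ) < (p:ℚ) := by linarith
      have hinv : (p:ℚ)⁻¹ * (p:ℚ) = 1 := inv_mul_cancel₀ (ne_of_gt hp0)
      have hinvpos : (0:ℚ) < (p:ℚ)⁻¹ := inv_pos.mpr hp0
      nlinarith
    simpa using key
  have hexp : (2:ℚ) ^ r.primeFactors.card * r.totient
      = (r:ℚ) * ∏ p ∈ r.primeFactors, (2 * (1 - (p:ℚ)⁻¹)) := by
    rw [htot, Finset.prod_mul_distrib, Finset.prod_const]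
    ring
  rw [hexp]
  have hr' : (0:ℚ) < r := by exact_mod_cast Nat.pos_of_ne_zero hr
  nlinarith

private theorem runlen_mem_le (n : ℕ) (hn : n ≠ 0) (L : ℕ) (a : ℤ)
    (h : ∀ j ∈ Finset.Icc 1 L, 1 < Int.gcd (a + (j : ℤ)) (n : ℤ)) :
    L ≤ 4 ^ n.primeFactors.card := by
  classical
  set r : ℕ := ∏ p ∈ n.primeFactors, p with hrdef
  have hrsq : Squarefree r := runlen_sqf_prod _ (fun p hp => Nat.prime_of_mem_primeFactors hp)
  have hω : r.primeFactors.card = n.primeFactors.card := by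
    rw [hrdef, Nat.primeFactors_prod (fun p hp => Nat.prime_of_mem_primeFactors hp)]
  have h' : ∀ x ∈ Finset.Ioc a (a + L), Int.gcd x r ≠ 1 := by
    intro x hx
    rw [Finset.mem_Ioc] at hx
    obtain ⟨j, hj⟩ : ∃ j : ℕ, (j:ℤ) = x - a := ⟨(x-a).toNat, Int.toNat_of_nonneg (by omega)⟩
    have hj1 : 1 ≤ j := by omega
    have hjL : j ≤ L := by
      have : (j:ℤ) ≤ L := by omega
      exact_mod_cast this
    have := h j (Finset.mem_Icc.mpr ⟨hj1, hjL⟩)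
    have hax : a + (j:ℤ) = x := by omega
    rw [hax] at this
    exact Nat.ne_of_gt (runlen_gcd_transfer n hn x this)
  have hkey := runlen_key r hrsq a L h'
  rw [runlen_card_divisors r hrsq] at hkey
  have hlow := runlen_totient_lower r hrsq.ne_zero
  have hφ : (0:ℚ) < r.totient := by
    exact_mod_cast Nat.totient_pos.mpr (Nat.pos_of_ne_zero hrsq.ne_zero)
  have hchain : (L:ℚ) * r.totient ≤ (4 ^ r.primeFactors.card : ℚ) * r.totient := by
    calc (L:ℚ) * r.totient ≤ ((2 ^ r.primeFactors.card : ℕ) : ℚ) * r := hkey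
      _ ≤ (2 ^ r.primeFactors.card : ℚ) * (2 ^ r.primeFactors.card * r.totient) := by
          push_cast
          have h2 : (0:ℚ) ≤ 2 ^ r.primeFactors.card := by positivity
          exact mul_le_mul_of_nonneg_left hlow h2
      _ = (4 ^ r.primeFactors.card : ℚ) * r.totient := by
          rw [← mul_assoc, ← mul_pow]
          norm_num
  have : (L:ℚ) ≤ (4 ^ r.primeFactors.card : ℚ) :=
    le_of_mul_le_mul_right hchain hφ
  rw [hω] at this
  exact_mod_cast this

private theorem runlen_pow_bound (n : ℕ) (hn : n ≠ 0) :
    16 ^ n.primeFactors.card ≤ 2 ^ 24 * n := by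
  classical
  set S := n.primeFactors with hS
  set S₁ := S.filter (fun p => 16 ≤ p) with hS1
  have hsub : S \ S₁ ⊆ (Finset.range 16).filter Nat.Prime := by
    intro p hp
    rw [Finset.mem_sdiff] at hp
    rw [Finset.mem_filter, Finset.mem_range]
    have hpp : p.Prime := Nat.prime_of_mem_primeFactors hp.1
    have h16 : p < 16 := by
      by_contra hcon
      exact hp.2 (Finset.mem_filter.mpr ⟨hp.1, by omega⟩)
    exact ⟨h16, hpp⟩
  have hcard6 : ((Finset.range 16).filter Nat.Prime).card = 6 := by decide
  have h1 : (S \ S₁).card ≤ 6 := hcard6 ▸ Finset.card_le_card hsub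
  have h2 : S.card ≤ 6 + S₁.card := by
    have := Finset.card_sdiff_add_card_eq_card (Finset.filter_subset (fun p => 16 ≤ p) S)
    rw [← hS1] at this
    omega
  have h3 : 16 ^ S₁.card ≤ n := by
    calc 16 ^ S₁.card = ∏ _p ∈ S₁, 16 := by rw [Finset.prod_const]
      _ ≤ ∏ p ∈ S₁, p := by
          apply Finset.prod_le_prod'
          intro p hp
          rw [hS1, Finset.mem_filter] at hp
          exact hp.2
      _ ≤ ∏ p ∈ S, p := by
          apply Finset.prod_le_prod_of_subset_of_one_le' (Finset.filter_subset _ S)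
          intro p hp _
          exact (Nat.prime_of_mem_primeFactors hp).one_lt.le
      _ ≤ n := Nat.le_of_dvd (Nat.pos_of_ne_zero hn) (Nat.prod_primeFactors_dvd n)
  calc 16 ^ S.card ≤ 16 ^ (6 + S₁.card) := Nat.pow_le_pow_right (by norm_num) h2
    _ = 16 ^ 6 * 16 ^ S₁.card := pow_add 16 6 _
    _ ≤ 16 ^ 6 * n := Nat.mul_le_mul_left _ h3
    _ = 2 ^ 24 * n := by norm_num

/-- `runLen n` is the length of the longest run of consecutive integers each of which
fails to be coprime to `n`. -/
noncomputable def runLen (n : ℕ) : ℕ :=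
  sSup {L : ℕ | ∃ a : ℤ, ∀ j ∈ Finset.Icc 1 L, 1 < Int.gcd (a + (j : ℤ)) (n : ℤ)}

private theorem runLen_le (n : ℕ) (hn : n ≠ 0) : runLen n ≤ 4 ^ n.primeFactors.card := by
  have h0 : (0:ℕ) ∈ {L : ℕ | ∃ a : ℤ, ∀ j ∈ Finset.Icc 1 L, 1 < Int.gcd (a + (j : ℤ)) (n : ℤ)} :=
    ⟨0, by simp⟩
  apply csSup_le ⟨0, h0⟩
  rintro L ⟨a, ha⟩
  exact runlen_mem_le n hn L a ha

theorem stmt17 :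
    Tendsto (fun n : ℕ => (runLen n : ℝ) / n) atTop (nhds 0) := by
  have hsqrt : Tendsto (fun n : ℕ => Real.sqrt n) atTop atTop := by
    rw [tendsto_atTop_atTop]
    intro b
    refine ⟨⌈b ^ 2⌉₊, fun n hn => ?_⟩
    have h1 : b ^ 2 ≤ (n : ℝ) := le_trans (Nat.le_ceil _) (by exact_mod_cast hn)
    calc b ≤ |b| := le_abs_self b
      _ = Real.sqrt (b ^ 2) := (Real.sqrt_sq_eq_abs b).symm
      _ ≤ Real.sqrt n := Real.sqrt_le_sqrt h1
  have hlim : Tendsto (fun n : ℕ => (2:ℝ) ^ 12 / Real.sqrt n) atTop (nhds 0) :=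
    Tendsto.div_atTop tendsto_const_nhds hsqrt
  apply tendsto_of_tendsto_of_tendsto_of_le_of_le' tendsto_const_nhds hlim
  · filter_upwards [eventually_ge_atTop 1] with n hn
    positivity
  · filter_upwards [eventually_ge_atTop 1] with n hn
    have hn0 : n ≠ 0 := by omega
    have hnR : (0:ℝ) < n := by exact_mod_cast Nat.pos_of_ne_zero hn0
    have hs0 : (0:ℝ) < Real.sqrt n := Real.sqrt_pos.mpr hnR
    have hsq : ((runLen n : ℝ)) ^ 2 ≤ 2 ^ 24 * n := by
      have e : (runLen n) ^ 2 ≤ 2 ^ 24 * n := by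
        calc (runLen n) ^ 2 ≤ (4 ^ n.primeFactors.card) ^ 2 :=
              Nat.pow_le_pow_left (runLen_le n hn0) 2
          _ = 16 ^ n.primeFactors.card := by
              rw [← pow_mul, mul_comm, pow_mul]
              norm_num
          _ ≤ 2 ^ 24 * n := runlen_pow_bound n hn0
      exact_mod_cast e
    have h2 : (runLen n : ℝ) ≤ 2 ^ 12 * Real.sqrt n := by
      have h3 : (runLen n : ℝ) ≤ Real.sqrt (2 ^ 24 * n) :=
        Real.le_sqrt_of_sq_le hsq
      calc (runLen n : ℝ) ≤ Real.sqrt (2 ^ 24 * n) := h3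
        _ = Real.sqrt (2 ^ 24) * Real.sqrt n := Real.sqrt_mul (by positivity) _
        _ = 2 ^ 12 * Real.sqrt n := by
            rw [show (2:ℝ) ^ 24 = (2 ^ 12) ^ 2 by norm_num, Real.sqrt_sq (by positivity)]
    rw [div_le_div_iff₀ hnR hs0]
    nlinarith [Real.mul_self_sqrt (le_of_lt hnR), Nat.cast_nonneg (α := ℝ) (runLen n)]
end

section
/- Let (I_k)_{k≥1} be a sequence of intervals in ℝ and (U_k)_{k≥1} a sequence of Lebesgue-measurable sets such that for some real ε with 0 < ε < 1 one has U_k ⊆ I_k and λ(U_k) ≥ ε·λ(I_k) for all k, and λ(I_k) → 0 as k → ∞. Then λ(limsup_{k→∞} I_k) = λ(limsup_{k→∞} U_k), where λ denotes Lebesgue measure and the limsup of a sequence of sets is the set of points lying in infinitely many of them. -/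
open MeasureTheory Filter Set
open scoped Topology ENNReal

/-- The set of points in infinitely many `S k` equals `⋂ K, ⋃ k ≥ K, S k`. -/
lemma limsup_set_eq (S : ℕ → Set ℝ) :
    {x : ℝ | {k : ℕ | x ∈ S k}.Infinite} = ⋂ K : ℕ, ⋃ k : ℕ, ⋃ _ : K ≤ k, S k := by
  ext x
  simp only [mem_setOf_eq, mem_iInter, mem_iUnion]
  rw [← Nat.frequently_atTop_iff_infinite, frequently_atTop]
  constructor
  · intro h K; obtain ⟨b, hb, hxb⟩ := h K; exact ⟨b, hb, hxb⟩
  · intro h K; obtain ⟨b, hb, hxb⟩ := h K; exact ⟨b, hb, hxb⟩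

theorem stmt18 (I U : ℕ → Set ℝ)
    (hI : ∀ k, ∃ a b : ℝ, Set.Ioo a b ⊆ I k ∧ I k ⊆ Set.Icc a b)
    (hU : ∀ k, MeasurableSet (U k))
    (ε : ℝ) (hε0 : 0 < ε) (hε1 : ε < 1)
    (hsub : ∀ k, U k ⊆ I k)
    (hbig : ∀ k, ENNReal.ofReal ε * volume (I k) ≤ volume (U k))
    (hto0 : Tendsto (fun k => volume (I k)) atTop (nhds 0)) :
    volume {x : ℝ | {k : ℕ | x ∈ I k}.Infinite} =
      volume {x : ℝ | {k : ℕ | x ∈ U k}.Infinite} := by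
  choose a b hab1 hab2 using hI
  set J : ℕ → Set ℝ := fun k => Icc (a k) (b k) with hJdef
  have hIJ : ∀ k, I k ⊆ J k := hab2
  have hJvol : ∀ k, volume (J k) = volume (I k) := by
    intro k
    apply le_antisymm
    · calc volume (J k) = volume (Ioo (a k) (b k)) := by
            simp [hJdef, Real.volume_Icc, Real.volume_Ioo]
        _ ≤ volume (I k) := measure_mono (hab1 k)
    · exact measure_mono (hab2 k)
  set LI := {x : ℝ | {k : ℕ | x ∈ I k}.Infinite} with hLI
  set LU := {x : ℝ | {k : ℕ | x ∈ U k}.Infinite} with hLU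
  set LJ := {x : ℝ | {k : ℕ | x ∈ J k}.Infinite} with hLJ
  have hUI : ∀ k, U k ⊆ J k := fun k => (hsub k).trans (hIJ k)
  have hLUI : LU ⊆ LI := fun x hx => hx.mono (fun k hk => hsub k hk)
  have hLIJ : LI ⊆ LJ := fun x hx => hx.mono (fun k hk => hIJ k hk)
  -- the bad null set of degenerate intervals
  set N : Set ℝ := ⋃ k : ℕ, {x : ℝ | x ∈ J k ∧ volume (J k) = 0} with hN
  have hNnull : volume N = 0 := by
    apply measure_iUnion_null
    intro k
    by_cases h : volume (J k) = 0
    · exact measure_mono_null (fun x hx => hx.1) h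
    · have : {x : ℝ | x ∈ J k ∧ volume (J k) = 0} = ∅ := by
        ext x; simp [h]
      simp [this]
  -- Key: for each K, a.e. point of LJ is in ⋃ k ≥ K, U k
  have key : ∀ K : ℕ, volume (LJ \ ⋃ k : ℕ, ⋃ _ : K ≤ k, U k) = 0 := by
    intro K
    set V : Set ℝ := ⋃ k : ℕ, ⋃ _ : K ≤ k, U k with hV
    set A : Set ℝ := LJ \ V with hA
    by_contra hA0
    -- a.e. density point of A
    have hdens := Besicovitch.ae_tendsto_measure_inter_div (volume : Measure ℝ) A
    have hres0 : (volume : Measure ℝ).restrict A ≠ 0 := by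
      intro h
      apply hA0
      have := congrArg (fun μ : Measure ℝ => μ univ) h
      simpa [Measure.restrict_apply_univ] using this
    have : NeBot (ae ((volume : Measure ℝ).restrict A)) := ae_neBot.mpr hres0
    have hNres : ∀ᵐ x ∂(volume : Measure ℝ).restrict A, x ∉ N := by
      refine ae_iff.mpr ?_
      simp only [not_not]
      exact le_antisymm (le_trans (Measure.restrict_le_self _) hNnull.le) zero_le
    have hmemA : ∀ᵐ x ∂(volume : Measure ℝ).restrict A, x ∈ LJ \ V := by
      have hVm : MeasurableSet V := by
        exact MeasurableSet.iUnion fun k => MeasurableSet.iUnion fun _ => hU k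
      have hLJm : MeasurableSet LJ := by
        rw [hLJ, limsup_set_eq]
        exact MeasurableSet.iInter fun K => MeasurableSet.iUnion fun k =>
          MeasurableSet.iUnion fun _ => measurableSet_Icc
      exact ae_restrict_mem (hLJm.diff hVm)
    obtain ⟨x, hx, hxN, hxA⟩ := (hdens.and (hNres.and hmemA)).exists
    obtain ⟨hxLJ, hxV⟩ := hxA
    -- density gives a small radius threshold
    have hc : (1 : ENNReal) - ENNReal.ofReal (ε / 4) < 1 :=
      ENNReal.sub_lt_self ENNReal.one_ne_top one_ne_zero
        (by simp [ENNReal.ofReal_pos]; linarith)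
    have hev : ∀ᶠ r in 𝓝[>] (0 : ℝ),
        (1 : ENNReal) - ENNReal.ofReal (ε / 4) <
          volume (A ∩ Metric.closedBall x r) / volume (Metric.closedBall x r) :=
      hx.eventually (eventually_gt_nhds hc)
    rw [eventually_nhdsWithin_iff, Metric.eventually_nhds_iff] at hev
    obtain ⟨r0, hr0, hball⟩ := hev
    -- choose k ≥ K with x ∈ J k, volume J k small
    have hJto0 : Tendsto (fun k => volume (J k)) atTop (nhds 0) := by
      simpa [hJvol] using hto0
    have hsmall : ∀ᶠ k in atTop, volume (J k) < ENNReal.ofReal r0 := by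
      apply hJto0.eventually_lt_const
      simp [ENNReal.ofReal_pos, hr0]
    obtain ⟨K0, hK0⟩ := eventually_atTop.mp hsmall
    obtain ⟨k, hkmem, hkgt⟩ := hxLJ.exists_gt (max K K0)
    have hkK : K ≤ k := le_of_lt (lt_of_le_of_lt (le_max_left _ _) hkgt)
    have hkK0 : K0 ≤ k := le_of_lt (lt_of_le_of_lt (le_max_right _ _) hkgt)
    have hxJk : x ∈ J k := hkmem
    have hJk0 : volume (J k) ≠ 0 := by
      intro h; exact hxN (mem_iUnion.mpr ⟨k, hxJk, h⟩)
    have hab : a k ≤ b k := le_trans hxJk.1 hxJk.2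
    set r : ℝ := b k - a k with hr
    have hvolJk : volume (J k) = ENNReal.ofReal r := by
      simp [hJdef, Real.volume_Icc, hr]
    have hrpos : 0 < r := by
      by_contra h
      push_neg at h
      apply hJk0
      rw [hvolJk]
      simp [ENNReal.ofReal_eq_zero.mpr h]
    have hrr0 : r < r0 := by
      have := hK0 k hkK0
      rw [hvolJk] at this
      exact (ENNReal.ofReal_lt_ofReal_iff hr0).mp this
    -- the interval is inside the ball of radius r
    have hJB : J k ⊆ Metric.closedBall x r := by
      intro y hy
      rw [Metric.mem_closedBall, Real.dist_eq, abs_le]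
      have hrEq : r = b k - a k := rfl
      exact ⟨by linarith [hy.1, hy.2, hxJk.1, hxJk.2],
        by linarith [hy.1, hy.2, hxJk.1, hxJk.2]⟩
    have hvolB : volume (Metric.closedBall x r) = ENNReal.ofReal (2 * r) :=
      Real.volume_closedBall x r
    -- density estimate at radius r
    have hdr := hball (y := r) (by rw [Real.dist_eq, sub_zero, abs_of_pos hrpos]; exact hrr0)
      (mem_Ioi.mpr hrpos)
    have hB0 : volume (Metric.closedBall x r) ≠ 0 := by
      rw [hvolB]; simp [ENNReal.ofReal_eq_zero]; linarith
    have hBtop : volume (Metric.closedBall x r) ≠ ⊤ := by rw [hvolB]; exact ENNReal.ofReal_ne_top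
    have hlow : ((1 : ENNReal) - ENNReal.ofReal (ε / 4)) * volume (Metric.closedBall x r) <
        volume (A ∩ Metric.closedBall x r) :=
      (ENNReal.lt_div_iff_mul_lt (Or.inl hB0) (Or.inl hBtop)).mp hdr
    -- upper estimate for μ (A ∩ B)
    have hAU : A ∩ U k = ∅ := by
      apply eq_empty_iff_forall_notMem.mpr
      rintro y ⟨hyA, hyU⟩
      exact hyA.2 (mem_iUnion.mpr ⟨k, mem_iUnion.mpr ⟨hkK, hyU⟩⟩)
    have hAJ : A ∩ J k ⊆ J k \ U k := by
      rintro y ⟨hyA, hyJ⟩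
      exact ⟨hyJ, fun hyU => (eq_empty_iff_forall_notMem.mp hAU y) ⟨hyA, hyU⟩⟩
    have hUtop : volume (U k) ≠ ⊤ := by
      refine ne_top_of_le_ne_top ?_ (measure_mono (hUI k))
      rw [hvolJk]; exact ENNReal.ofReal_ne_top
    have hJU : volume (J k \ U k) = volume (J k) - volume (U k) :=
      measure_diff (hUI k) (hU k).nullMeasurableSet hUtop
    have hUbig : ENNReal.ofReal (ε * r) ≤ volume (U k) := by
      have := hbig k
      rw [← hJvol, hvolJk] at this
      calc ENNReal.ofReal (ε * r) = ENNReal.ofReal ε * ENNReal.ofReal r :=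
            ENNReal.ofReal_mul hε0.le
        _ ≤ volume (U k) := this
    have hBJ : volume (Metric.closedBall x r \ J k) =
        volume (Metric.closedBall x r) - volume (J k) :=
      measure_diff hJB measurableSet_Icc.nullMeasurableSet
        (by rw [hvolJk]; exact ENNReal.ofReal_ne_top)
    have hJUle : volume (J k \ U k) ≤ ENNReal.ofReal (r - ε * r) := by
      rw [hJU, hvolJk, ENNReal.ofReal_sub _ (by positivity : (0:ℝ) ≤ ε * r)]
      exact tsub_le_tsub le_rfl hUbig
    have hBJle : volume (Metric.closedBall x r \ J k) ≤ ENNReal.ofReal r := by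
      rw [hBJ, hvolB, hvolJk, two_mul, ENNReal.ofReal_add hrpos.le hrpos.le]
      exact le_of_eq (ENNReal.add_sub_cancel_right ENNReal.ofReal_ne_top)
    have hsplit : volume (A ∩ Metric.closedBall x r) ≤
        volume (A ∩ J k) + volume (Metric.closedBall x r \ J k) := by
      refine le_trans (measure_mono ?_) (measure_union_le _ _)
      rintro y ⟨hyA, hyB⟩
      by_cases hy : y ∈ J k
      · exact Or.inl ⟨hyA, hy⟩
      · exact Or.inr ⟨hyB, hy⟩
    -- combine everything
    have hup : volume (A ∩ Metric.closedBall x r) ≤ ENNReal.ofReal (2 * r - ε * r) := by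
      calc volume (A ∩ Metric.closedBall x r)
          ≤ volume (A ∩ J k) + volume (Metric.closedBall x r \ J k) := hsplit
        _ ≤ volume (J k \ U k) + volume (Metric.closedBall x r \ J k) := by
            exact add_le_add_left (measure_mono hAJ) _
        _ ≤ ENNReal.ofReal (r - ε * r) + ENNReal.ofReal r := add_le_add hJUle hBJle
        _ = ENNReal.ofReal (2 * r - ε * r) := by
            rw [← ENNReal.ofReal_add (by nlinarith) hrpos.le]
            ring_nf
    have hlow2 : ENNReal.ofReal (2 * r - (ε / 4) * (2 * r)) ≤
        ((1 : ENNReal) - ENNReal.ofReal (ε / 4)) * volume (Metric.closedBall x r) := by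
      rw [hvolB, ENNReal.sub_mul (fun _ _ => ENNReal.ofReal_ne_top), one_mul,
        ← ENNReal.ofReal_mul (by linarith : (0:ℝ) ≤ ε / 4),
        ENNReal.ofReal_sub _ (by positivity : (0:ℝ) ≤ ε / 4 * (2 * r))]
    have hfinal : ENNReal.ofReal (2 * r - (ε / 4) * (2 * r)) < ENNReal.ofReal (2 * r - ε * r) :=
      lt_of_le_of_lt hlow2 (lt_of_lt_of_le hlow hup)
    have : 2 * r - (ε / 4) * (2 * r) < 2 * r - ε * r := by
      have hpos : 0 < 2 * r - ε * r := by nlinarith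
      exact (ENNReal.ofReal_lt_ofReal_iff hpos).mp hfinal
    nlinarith
  -- assemble
  apply le_antisymm
  · calc volume LI ≤ volume LJ := measure_mono hLIJ
      _ ≤ volume (LU ∪ ⋃ K : ℕ, (LJ \ ⋃ k : ℕ, ⋃ _ : K ≤ k, U k)) := by
          apply measure_mono
          intro x hx
          by_cases hxU : x ∈ LU
          · exact Or.inl hxU
          · refine Or.inr (mem_iUnion.mpr ?_)
            rw [hLU, limsup_set_eq] at hxU
            simp only [mem_iInter, not_forall] at hxU
            obtain ⟨K, hK⟩ := hxU
            exact ⟨K, hx, hK⟩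
      _ ≤ volume LU + volume (⋃ K : ℕ, (LJ \ ⋃ k : ℕ, ⋃ _ : K ≤ k, U k)) := measure_union_le _ _
      _ = volume LU := by rw [measure_iUnion_null key, add_zero]
  · exact measure_mono hLUI
end
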